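/- A one-dimensional TAF-ring with a unique height-zero prime ideal is an integral domain. -/

import Mathlib

/-- An ideal is 2-absorbing if whenever a product of three elements lies in it,
the product of some two of them lies in it. -/
def IsTwoAbsorbing {R : Type*} [CommRing R] (I : Ideal R) : Prop :=
  ∀ a b c : R, a * b * c ∈ I → a * b ∈ I ∨ a * c ∈ I ∨ b * c ∈ I

/-- A TAF-ring: every proper ideal is a finite product of proper 2-absorbing ideals. -/
def IsTAFRing (R : Type*) [CommRing R] : Prop :=
  ∀ I : Ideal R, I ≠ ⊤ → ∃ (n : ℕ) (J : Fin n → Ideal R),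
    (∀ i, J i ≠ ⊤ ∧ IsTwoAbsorbing (J i)) ∧ I = ∏ i, J i

section TwoAbs
variable {R : Type*} [CommRing R] {J : Ideal R}

/-- In a 2-absorbing ideal, a power in J forces the square in J. -/
lemma IsTwoAbsorbing.sq_mem (hJ : IsTwoAbsorbing J) {a : R} :
    ∀ n : ℕ, 1 ≤ n → a ^ n ∈ J → a * a ∈ J := by
  intro n
  induction n with
  | zero => omega
  | succ k ih =>
    intro _ h
    rcases Nat.lt_or_ge k 2 with hk | hk
    · interval_cases k
      · simpa using J.mul_mem_left a (by simpa using h)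
      · simpa [sq] using h
    · -- k+1 ≥ 3 : a * a * a^(k-1) = a^(k+1)
      have h3 : a * a * a ^ (k - 1) ∈ J := by
        have e : a ^ (k + 1) = a * a * a ^ (k - 1) := by
          rw [show k + 1 = 1 + 1 + (k - 1) by omega, pow_add, pow_add, pow_one]
        rwa [e] at h
      rcases hJ a a (a ^ (k - 1)) h3 with h' | h' | h'
      · exact h'
      · rw [← pow_succ', show k - 1 + 1 = k by omega] at h'
        exact ih (by omega) h'
      · rw [← pow_succ', show k - 1 + 1 = k by omega] at h'
        exact ih (by omega) h'

lemma IsTwoAbsorbing.mul_mem_of_mem_radical (hJ : IsTwoAbsorbing J) (hJtop : J ≠ ⊤)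
    {a b : R} (ha : a ∈ J.radical) (hb : b ∈ J.radical) : a * b ∈ J := by
  obtain ⟨n, hn⟩ := Ideal.mem_radical_iff.mp ha
  obtain ⟨m, hm⟩ := Ideal.mem_radical_iff.mp hb
  have hn1 : 1 ≤ n := by
    rcases Nat.eq_zero_or_pos n with h | h
    · subst h; simp at hn; exact absurd (Ideal.eq_top_iff_one J |>.mpr hn) hJtop
    · exact h
  have hm1 : 1 ≤ m := by
    rcases Nat.eq_zero_or_pos m with h | h
    · subst h; simp at hm; exact absurd (Ideal.eq_top_iff_one J |>.mpr hm) hJtop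
    · exact h
  have ha2 : a * a ∈ J := hJ.sq_mem n hn1 hn
  have hb2 : b * b ∈ J := hJ.sq_mem m hm1 hm
  have habs : a * b * (a + b) ∈ J := by
    have : a * b * (a + b) = (a * a) * b + (b * b) * a := by ring
    rw [this]
    exact J.add_mem (J.mul_mem_right _ ha2) (J.mul_mem_right _ hb2)
  rcases hJ a b (a + b) habs with h | h | h
  · exact h
  · have : a * b = a * (a + b) - a * a := by ring
    rw [this]; exact J.sub_mem h ha2
  · have : a * b = b * (a + b) - b * b := by ring
    rw [this]; exact J.sub_mem h hb2

/-- Halving lemma: if no power of m is in J, then m^k * v ∈ J implies m * v ∈ J. -/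
lemma IsTwoAbsorbing.halving (hJ : IsTwoAbsorbing J) {m : R}
    (hm : ∀ k : ℕ, 1 ≤ k → m ^ k ∉ J) :
    ∀ k : ℕ, 1 ≤ k → ∀ v : R, m ^ k * v ∈ J → m * v ∈ J := by
  intro k
  induction k with
  | zero => omega
  | succ j ih =>
    intro _ v hv
    rcases Nat.eq_zero_or_pos j with hj | hj
    · subst hj; simpa using hv
    · have h3 : m * m ^ j * v ∈ J := by rwa [← pow_succ'] 
      rcases hJ m (m ^ j) v h3 with h | h | h
      · exact absurd (by rwa [← pow_succ'] at h) (hm (j+1) (by omega))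
      · exact h
      · exact ih hj v h
end TwoAbs


section ProdLemmas
variable {R : Type*} [CommRing R] {ι : Type*} [DecidableEq ι]

lemma Ideal.prod_le_pow_card (s : Finset ι) (J : ι → Ideal R) (K : Ideal R)
    (h : ∀ i ∈ s, J i ≤ K) : (∏ i ∈ s, J i) ≤ K ^ s.card := by
  classical
  induction s using Finset.induction_on with
  | empty => simp
  | @insert a s' hx ih =>
    rw [Finset.prod_insert hx, Finset.card_insert_of_notMem hx, pow_succ']
    exact Ideal.mul_mono (h a (Finset.mem_insert_self a s'))
      (ih fun i hi => h i (Finset.mem_insert_of_mem hi))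

lemma Ideal.pow_card_le_prod (s : Finset ι) (J : ι → Ideal R) (K : Ideal R)
    (h : ∀ i ∈ s, K ≤ J i) : K ^ s.card ≤ ∏ i ∈ s, J i := by
  classical
  induction s using Finset.induction_on with
  | empty => simp
  | @insert a s' hx ih =>
    rw [Finset.prod_insert hx, Finset.card_insert_of_notMem hx, pow_succ']
    exact Ideal.mul_mono (h a (Finset.mem_insert_self a s'))
      (ih fun i hi => h i (Finset.mem_insert_of_mem hi))

lemma Ideal.prod_le_single (s : Finset ι) (J : ι → Ideal R) {i : ι} (hi : i ∈ s) :
    (∏ j ∈ s, J j) ≤ J i := by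
  rw [← Finset.mul_prod_erase s J hi]
  exact Ideal.mul_le_left

lemma Ideal.prod_le_pair (s : Finset ι) (J : ι → Ideal R) {i j : ι} (hi : i ∈ s)
    (hj : j ∈ s) (hij : i ≠ j) : (∏ k ∈ s, J k) ≤ J i * J j := by
  rw [← Finset.mul_prod_erase s J hi]
  refine Ideal.mul_mono le_rfl ?_
  exact Ideal.prod_le_single _ _ (Finset.mem_erase.mpr ⟨hij.symm, hj⟩)

end ProdLemmas

lemma Ideal.map_finset_prod {R S : Type*} [CommRing R] [CommRing S] (f : R →+* S)
    {ι : Type*} (s : Finset ι) (J : ι → Ideal R) :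
    Ideal.map f (∏ i ∈ s, J i) = ∏ i ∈ s, Ideal.map f (J i) := by
  classical
  induction s using Finset.induction_on with
  | empty => simp only [Finset.prod_empty, Ideal.one_eq_top, Ideal.map_top]
  | @insert a s' hx ih => rw [Finset.prod_insert hx, Finset.prod_insert hx, Ideal.map_mul, ih]



lemma IsTAFRing.quotient {R : Type*} [CommRing R] (h : IsTAFRing R) (K : Ideal R) :
    IsTAFRing (R ⧸ K) := by
  intro Ibar hIbar
  have hsurj : Function.Surjective (Ideal.Quotient.mk K) := Ideal.Quotient.mk_surjective
  set I := Ideal.comap (Ideal.Quotient.mk K) Ibar with hI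
  have hmapI : Ideal.map (Ideal.Quotient.mk K) I = Ibar :=
    Ideal.map_comap_of_surjective _ hsurj Ibar
  have hItop : I ≠ ⊤ := by
    intro e
    rw [e, Ideal.map_top] at hmapI
    exact hIbar hmapI.symm
  obtain ⟨n, J, hJ, hprod⟩ := h I hItop
  have hKI : K ≤ I := by
    intro x hx
    rw [hI, Ideal.mem_comap, Ideal.Quotient.eq_zero_iff_mem.mpr hx]
    exact Ibar.zero_mem
  have hKle : ∀ i, K ≤ J i := fun i =>
    le_trans hKI (hprod ▸ Ideal.prod_le_single Finset.univ J (Finset.mem_univ i))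
  refine ⟨n, fun i => Ideal.map (Ideal.Quotient.mk K) (J i), fun i => ⟨?_, ?_⟩, ?_⟩
  · -- properness
    intro e
    simp only at e
    have := Ideal.comap_map_of_surjective _ hsurj (J i)
    rw [e, Ideal.comap_top] at this
    have hker : Ideal.comap (Ideal.Quotient.mk K) (⊥ : Ideal (R ⧸ K)) ≤ J i := by
      intro x hx
      rw [Ideal.mem_comap, Ideal.mem_bot, Ideal.Quotient.eq_zero_iff_mem] at hx
      exact hKle i hx
    rw [sup_eq_left.mpr hker] at this
    exact (hJ i).1 this.symm
  · -- two-absorbing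
    intro a b c habc
    obtain ⟨a', rfl⟩ := hsurj a
    obtain ⟨b', rfl⟩ := hsurj b
    obtain ⟨c', rfl⟩ := hsurj c
    rw [← map_mul, ← map_mul] at habc
    obtain ⟨x, hxJ, hxeq⟩ := (Ideal.mem_map_iff_of_surjective _ hsurj).mp habc
    have : a' * b' * c' ∈ J i := by
      have hsub : a' * b' * c' - x ∈ K := by
        rw [← Ideal.Quotient.eq_zero_iff_mem, map_sub, hxeq, sub_self]
      have := (J i).add_mem (hKle i hsub) hxJ
      simpa using this
    rcases (hJ i).2 a' b' c' this with h' | h' | h'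
    · exact Or.inl (by rw [← map_mul]; exact Ideal.mem_map_of_mem _ h')
    · exact Or.inr (Or.inl (by rw [← map_mul]; exact Ideal.mem_map_of_mem _ h'))
    · exact Or.inr (Or.inr (by rw [← map_mul]; exact Ideal.mem_map_of_mem _ h'))
  · rw [← hmapI, hprod, Ideal.map_finset_prod]

section Loc
variable {R : Type*} [CommRing R] (M : Submonoid R) (S : Type*) [CommRing S]
  [Algebra R S] [IsLocalization M S]

lemma IsTwoAbsorbing.map_localization {J : Ideal R} (hJ : IsTwoAbsorbing J)
    (hM : M = M) :
    IsTwoAbsorbing (Ideal.map (algebraMap R S) J) := by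
  intro a b c habc
  obtain ⟨⟨ra, sa⟩, rfl⟩ := IsLocalization.mk'_surjective M a
  obtain ⟨⟨rb, sb⟩, rfl⟩ := IsLocalization.mk'_surjective M b
  obtain ⟨⟨rc, sc⟩, rfl⟩ := IsLocalization.mk'_surjective M c
  rw [← IsLocalization.mk'_mul, ← IsLocalization.mk'_mul] at habc
  rw [IsLocalization.mk'_mem_map_algebraMap_iff M] at habc
  obtain ⟨t, htM, ht⟩ := habc
  have ht' : (t * ra) * rb * rc ∈ J := by
    have : (t * ra) * rb * rc = t * (ra * rb * rc) := by ring
    rwa [this]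
  rcases hJ (t * ra) rb rc ht' with h' | h' | h'
  · refine Or.inl ?_
    rw [← IsLocalization.mk'_mul, IsLocalization.mk'_mem_map_algebraMap_iff M]
    exact ⟨t, htM, by rwa [show t * (ra * rb) = t * ra * rb by ring]⟩
  · refine Or.inr (Or.inl ?_)
    rw [← IsLocalization.mk'_mul, IsLocalization.mk'_mem_map_algebraMap_iff M]
    exact ⟨t, htM, by rwa [show t * (ra * rc) = t * ra * rc by ring]⟩
  · refine Or.inr (Or.inr ?_)
    rw [← IsLocalization.mk'_mul, IsLocalization.mk'_mem_map_algebraMap_iff M]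
    exact ⟨t, htM, J.mul_mem_left t h'⟩

lemma IsTAFRing.localization (h : IsTAFRing R) (hM : M = M) : IsTAFRing S := by
  classical
  intro I' hI'top
  set I := Ideal.comap (algebraMap R S) I' with hI
  have hmapI : Ideal.map (algebraMap R S) I = I' := IsLocalization.map_comap M S I'
  have hItop : I ≠ ⊤ := by
    intro e
    rw [e, Ideal.map_top] at hmapI
    exact hI'top hmapI.symm
  obtain ⟨n, J, hJ, hprod⟩ := h I hItop
  set G : Finset (Fin n) :=
    Finset.univ.filter (fun i => Ideal.map (algebraMap R S) (J i) ≠ ⊤) with hG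
  have hprodG : (∏ i ∈ G, Ideal.map (algebraMap R S) (J i)) = I' := by
    have h1 : (∏ i : Fin n, Ideal.map (algebraMap R S) (J i)) = I' := by
      rw [← Ideal.map_finset_prod, ← hprod, hmapI]
    rw [← h1, ← Finset.prod_filter_mul_prod_filter_not Finset.univ
      (fun i => Ideal.map (algebraMap R S) (J i) ≠ ⊤)]
    have h2 : (∏ i ∈ Finset.univ.filter
        (fun i => ¬ Ideal.map (algebraMap R S) (J i) ≠ ⊤), Ideal.map (algebraMap R S) (J i))
        = ⊤ := by
      rw [Finset.prod_congr rfl (fun i hi => not_not.mp (Finset.mem_filter.mp hi).2)]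
      simp [Ideal.one_eq_top, Ideal.top_pow]
    rw [← hG] at *
    rw [h2, Ideal.mul_top]
  -- reindex G by Fin G.card
  have hGne : G.Nonempty := by
    by_contra he
    rw [Finset.not_nonempty_iff_eq_empty] at he
    rw [he, Finset.prod_empty, Ideal.one_eq_top] at hprodG
    exact hI'top hprodG.symm
  refine ⟨G.card, fun k => Ideal.map (algebraMap R S) (J (G.equivFin.symm k)), fun k => ⟨?_, ?_⟩, ?_⟩
  · exact (Finset.mem_filter.mp (G.equivFin.symm k).2).2
  · exact (hJ _).2.map_localization M S rfl
  · rw [← hprodG, ← Finset.prod_attach G (fun i => Ideal.map (algebraMap R S) (J i))]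
    exact (Equiv.prod_comp G.equivFin.symm _).symm
end Loc

section Core
variable {T : Type*} [CommRing T]

lemma Ideal.pow_le_pow_left' {I J : Ideal T} (h : I ≤ J) : ∀ k : ℕ, I ^ k ≤ J ^ k := by
  intro k
  induction k with
  | zero => simp
  | succ j ih => rw [pow_succ, pow_succ]; exact Ideal.mul_mono ih h

lemma taf_core_lemma (htaf : IsTAFRing T) (Q M : Ideal T) (hQ : Q.IsPrime)
    (hQM : Q < M) (hMtop : M ≠ ⊤) (hpr : ∀ p : Ideal T, p.IsPrime → p = Q ∨ p = M)
    (hQ2 : Q * Q = ⊥) (x : T) (hx0 : x ≠ 0) (hxQ : x ∈ Q)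
    (hxM : ∀ μ ∈ M, μ * x = 0) : False := by
  classical
  have hQtop : Q ≠ ⊤ := hQ.ne_top
  -- every proper ideal is contained in M
  have c0 : ∀ I : Ideal T, I ≠ ⊤ → I ≤ M := by
    intro I hI
    obtain ⟨m', hm', hle⟩ := Ideal.exists_le_maximal I hI
    rcases hpr m' hm'.isPrime with rfl | rfl
    · exact le_trans hle (le_of_lt hQM)
    · exact hle
  -- span{x} * M = ⊥
  have spanxM : Ideal.span {x} * M = ⊥ := by
    rw [eq_bot_iff]
    refine Ideal.mul_le.mpr ?_
    intro r hr s hs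
    obtain ⟨c, rfl⟩ := Ideal.mem_span_singleton.mp hr
    rw [Ideal.mem_bot]
    calc x * c * s = c * (s * x) := by ring
    _ = 0 := by rw [hxM s hs, mul_zero]
  -- proper 2-absorbing ideals not inside Q contain M*M
  have c1 : ∀ J : Ideal T, J ≠ ⊤ → IsTwoAbsorbing J → ¬J ≤ Q → M * M ≤ J := by
    intro J hJtop hJ2 hJQ
    have hMrad : M ≤ J.radical := by
      intro μ hμ
      rw [Ideal.radical_eq_sInf]
      refine Ideal.mem_sInf.mpr ?_
      intro p hp
      rcases hpr p hp.2 with rfl | rfl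
      · exact absurd hp.1 hJQ
      · exact hμ
    exact Ideal.mul_le.mpr fun a ha b hb =>
      hJ2.mul_mem_of_mem_radical hJtop (hMrad ha) (hMrad hb)
  -- powers of M strictly decrease
  have pow_stab : ∀ s k : ℕ, M ^ s = M ^ (s + 1) → M ^ (s + k) = M ^ s := by
    intro s k h
    induction k with
    | zero => rfl
    | succ j ih =>
      calc M ^ (s + (j + 1)) = M ^ (s + j) * M := by rw [← pow_succ]; ring_nf
      _ = M ^ s * M := by rw [ih]
      _ = M ^ s := by rw [← pow_succ, ← h]
  have c2 : ∀ s : ℕ, 1 ≤ s → M ^ s ≠ M ^ (s + 1) := by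
    intro s hs heq
    have hEQ : ¬M ^ s ≤ Q := by
      intro hle
      have : M ≤ Q := Ideal.IsPrime.le_of_pow_le (hP := hQ) hle
      exact absurd (lt_of_lt_of_le hQM this) (lt_irrefl _)
    obtain ⟨y, hyE, hyQ⟩ := SetLike.not_le_iff_exists.mp hEQ
    have hyM : Ideal.span {y} ≠ ⊤ := by
      intro e
      refine hMtop (top_le_iff.mp ?_)
      rw [← e, Ideal.span_le, Set.singleton_subset_iff]
      exact Ideal.pow_le_self (Nat.one_le_iff_ne_zero.mp hs) hyE
    obtain ⟨n, J, hJ, hprod⟩ := htaf (Ideal.span {y}) hyM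
    have hyspan : y ∈ Ideal.span {y} := Ideal.mem_span_singleton_self y
    have hMle : ∀ i, M * M ≤ J i := by
      intro i
      refine c1 _ (hJ i).1 (hJ i).2 ?_
      intro hle
      exact hyQ (hle (Ideal.prod_le_single Finset.univ J (Finset.mem_univ i) (hprod ▸ hyspan)))
    have h2n : M ^ (2 * n) ≤ Ideal.span {y} := by
      have h1 : (M * M) ^ n ≤ ∏ i : Fin n, J i := by
        have := Ideal.pow_card_le_prod Finset.univ J (M * M) (fun i _ => hMle i)
        simpa using this
      have h2 : (M * M) ^ n = M ^ (2 * n) := by rw [two_mul, pow_add, mul_pow]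
      rw [← h2, hprod]
      exact h1
    have hEy : M ^ s ≤ Ideal.span {y} := by
      rcases le_or_gt (2 * n) s with hc | hc
      · exact le_trans (Ideal.pow_le_pow_right hc) h2n
      · have := pow_stab s (2 * n - s) heq
        rw [show s + (2 * n - s) = 2 * n by omega] at this
        rw [← this]
        exact h2n
    have hyME : y ∈ M * Ideal.span {y} := by
      have h1 : y ∈ M * M ^ s := by
        rw [← pow_succ', ← heq]  -- M * M^s = M^(s+1) = M^s
        exact hyE
      exact Ideal.mul_mono_right hEy h1
    obtain ⟨t, htM, hty⟩ := Ideal.mem_mul_span_singleton.mp hyME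
    have h0 : (1 - t) * y = 0 := by rw [sub_mul, one_mul, hty, sub_self]
    have h1t : (1 - t) ∈ Q := by
      rcases hQ.mem_or_mem (show (1 - t) * y ∈ Q by rw [h0]; exact Q.zero_mem) with h | h
      · exact h
      · exact absurd h hyQ
    have : (1 : T) ∈ M := by
      have := M.add_mem (le_of_lt hQM h1t) htM
      simpa using this
    exact hMtop (Ideal.eq_top_iff_one M |>.mpr this)
  -- choose m ∈ M \ (Q ∪ M*M)
  obtain ⟨m, hmM, hmQ, hmMM⟩ : ∃ m, m ∈ M ∧ m ∉ Q ∧ m ∉ M * M := by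
    have hMM : ¬M ≤ M * M := by
      intro hle
      have : M ^ 1 = M ^ (1 + 1) := by
        rw [pow_one, pow_add, pow_one]
        exact le_antisymm hle Ideal.mul_le_right
      exact c2 1 le_rfl this
    obtain ⟨a, haM, haMM⟩ := SetLike.not_le_iff_exists.mp hMM
    obtain ⟨b, hbM, hbQ⟩ := SetLike.not_le_iff_exists.mp (not_le_of_gt hQM : ¬M ≤ Q)
    by_cases haQ : a ∈ Q
    · by_cases hbMM : b ∈ M * M
      · refine ⟨a + b, M.add_mem haM hbM, ?_, ?_⟩
        · intro h; exact hbQ (by simpa using Q.sub_mem h haQ)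
        · intro h; exact haMM (by simpa using (M * M).sub_mem h hbMM)
      · exact ⟨b, hbM, hbQ, hbMM⟩
    · exact ⟨a, haM, haQ, haMM⟩
  -- M * M ≤ span {m}
  have c4 : M * M ≤ Ideal.span {m} := by
    have hmtop : Ideal.span {m} ≠ ⊤ := by
      intro e
      refine hMtop (top_le_iff.mp ?_)
      rw [← e, Ideal.span_le, Set.singleton_subset_iff]
      exact hmM
    obtain ⟨n, J, hJ, hprod⟩ := htaf (Ideal.span {m}) hmtop
    have hmspan : m ∈ Ideal.span {m} := Ideal.mem_span_singleton_self m
    have hnotQ : ∀ i, ¬J i ≤ Q := by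
      intro i hle
      exact hmQ (hle (Ideal.prod_le_single Finset.univ J (Finset.mem_univ i) (hprod ▸ hmspan)))
    have hn1 : n ≠ 0 := by
      intro e
      subst e
      simp only [Finset.univ_eq_empty, Finset.prod_empty, Ideal.one_eq_top] at hprod
      exact hmtop hprod
    have hn2 : n < 2 := by
      by_contra hn
      push_neg at hn
      have hup : Ideal.span {m} ≤ M ^ n := by
        rw [hprod]
        have := Ideal.prod_le_pow_card Finset.univ J M (fun i _ => c0 _ (hJ i).1)
        simpa using this
      have : m ∈ M * M := by
        have h1 : M ^ n ≤ M ^ 2 := Ideal.pow_le_pow_right hn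
        have h2 : (M : Ideal T) ^ 2 = M * M := by rw [pow_two]
        exact (h2 ▸ (h1 (hup hmspan)))
      exact hmMM this
    have hn : n = 1 := by omega
    subst hn
    rw [hprod, Fin.prod_univ_one]
    exact c1 _ (hJ 0).1 (hJ 0).2 (hnotQ 0)
  -- x lies in all powers of M
  have c5 : ∀ j : ℕ, x ∈ M ^ j := by
    have key : ∀ j : ℕ, 2 ≤ j → x ∈ M ^ j := by
      intro j hj
      set k := 2 * j with hk
      set I := Ideal.span {x} ⊔ M ^ k with hIdef
      have hIM : I ≤ M := by
        refine sup_le ?_ (Ideal.pow_le_self (by omega))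
        rw [Ideal.span_le, Set.singleton_subset_iff]
        exact le_of_lt hQM hxQ
      have hItop : I ≠ ⊤ := fun e => hMtop (top_le_iff.mp (e ▸ hIM))
      obtain ⟨n, J, hJ, hprod⟩ := htaf I hItop
      have hmk : m ^ k ∈ I := le_sup_right (a := Ideal.span {x}) (Ideal.pow_mem_pow hmM k)
      have hnotQ : ∀ i, ¬J i ≤ Q := by
        intro i hle
        have : m ^ k ∈ Q := hle (Ideal.prod_le_single Finset.univ J (Finset.mem_univ i) (hprod ▸ hmk))
        exact hmQ (hQ.mem_of_pow_mem k this)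
      have hMle : ∀ i, M * M ≤ J i := fun i => c1 _ (hJ i).1 (hJ i).2 (hnotQ i)
      have hn1 : n ≠ 0 := by
        intro e
        subst e
        simp only [Finset.univ_eq_empty, Finset.prod_empty, Ideal.one_eq_top] at hprod
        exact hItop hprod
      have hup : I ≤ M ^ n := by
        rw [hprod]
        have := Ideal.prod_le_pow_card Finset.univ J M (fun i _ => c0 _ (hJ i).1)
        simpa using this
      have hlow : M ^ (2 * n) ≤ I := by
        have h1 := Ideal.pow_card_le_prod Finset.univ J (M * M) (fun i _ => hMle i)
        have h2 : (M * M) ^ n = M ^ (2 * n) := by rw [two_mul, pow_add, mul_pow]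
        rw [hprod]
        rw [← h2]
        simpa using h1
      have h2n1 : M ^ (2 * n + 1) ≤ M ^ (k + 1) := by
        calc M ^ (2 * n + 1) = M ^ (2 * n) * M := by rw [pow_succ]
        _ ≤ I * M := Ideal.mul_mono hlow le_rfl
        _ = Ideal.span {x} * M ⊔ M ^ k * M := by rw [hIdef, Ideal.sup_mul]
        _ = M ^ (k + 1) := by rw [spanxM, ← pow_succ, bot_sup_eq]
      rcases le_or_gt (k + 1) (2 * n + 1) with hc | hc
      · have hnj : j ≤ n := by omega
        exact Ideal.pow_le_pow_right hnj (hup (le_sup_left (b := M ^ k) (Ideal.mem_span_singleton_self x)))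
      · exfalso
        have heq : M ^ (2 * n + 1) = M ^ (2 * n + 1 + 1) := by
          refine le_antisymm ?_ (Ideal.pow_le_pow_right (by omega))
          exact le_trans h2n1 (Ideal.pow_le_pow_right (by omega))
        exact c2 (2 * n + 1) (by omega) heq
    intro j
    rcases le_or_gt 2 j with hj | hj
    · exact key j hj
    · have := key 2 le_rfl
      exact Ideal.pow_le_pow_right (by omega) this
  -- factor span{x} : exactly one factor inside Q
  have hxtop : Ideal.span {x} ≠ ⊤ := by
    intro e
    refine hQtop (top_le_iff.mp ?_)
    rw [← e, Ideal.span_le, Set.singleton_subset_iff]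
    exact hxQ
  obtain ⟨n, J, hJ, hprod⟩ := htaf (Ideal.span {x}) hxtop
  have hxspan : x ∈ Ideal.span {x} := Ideal.mem_span_singleton_self x
  obtain ⟨i₀, hi₀⟩ : ∃ i, J i ≤ Q := by
    by_contra he
    push_neg at he
    have hMle : ∀ i, M * M ≤ J i := fun i => c1 _ (hJ i).1 (hJ i).2 (he i)
    have hlow : M ^ (2 * n) ≤ Ideal.span {x} := by
      have h1 := Ideal.pow_card_le_prod Finset.univ J (M * M) (fun i _ => hMle i)
      have h2 : (M * M) ^ n = M ^ (2 * n) := by rw [two_mul, pow_add, mul_pow]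
      rw [hprod, ← h2]
      simpa using h1
    have hMQ : M ≤ Q := by
      refine Ideal.IsPrime.le_of_pow_le (hP := hQ) (n := 2 * n + 1) ?_
      calc M ^ (2 * n + 1) = M ^ (2 * n) * M := by rw [pow_succ]
      _ ≤ Ideal.span {x} * M := Ideal.mul_mono hlow le_rfl
      _ = ⊥ := spanxM
      _ ≤ Q := bot_le
    exact absurd (lt_of_lt_of_le hQM hMQ) (lt_irrefl _)
  have huniq : ∀ i, i ≠ i₀ → ¬J i ≤ Q := by
    intro i hi hle
    have : Ideal.span {x} ≤ ⊥ := by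
      rw [hprod, ← hQ2]
      exact le_trans (Ideal.prod_le_pair Finset.univ J (Finset.mem_univ i) (Finset.mem_univ i₀) hi)
        (Ideal.mul_mono hle hi₀)
    exact hx0 (Ideal.mem_bot.mp (this hxspan))
  -- B = product of the other factors
  set B : Ideal T := ∏ i ∈ Finset.univ.erase i₀, J i with hB
  have hJB : Ideal.span {x} = J i₀ * B := by
    rw [hprod, ← Finset.mul_prod_erase Finset.univ J (Finset.mem_univ i₀)]
  set a := n - 1 with ha
  have hBlow : M ^ (2 * a) ≤ B := by
    have hcard : (Finset.univ.erase i₀).card = n - 1 := by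
      rw [Finset.card_erase_of_mem (Finset.mem_univ i₀)]
      simp
    have h1 := Ideal.pow_card_le_prod (Finset.univ.erase i₀) J (M * M)
      (fun i hi => c1 _ (hJ i).1 (hJ i).2 (huniq i (Finset.mem_erase.mp hi).1))
    rw [hcard] at h1
    have h2 : (M * M) ^ (n - 1) = M ^ (2 * (n - 1)) := by rw [two_mul, pow_add, mul_pow]
    rw [ha, ← h2]
    exact h1
  have hJMa : J i₀ * M ^ (2 * a) ≤ Ideal.span {x} := by
    rw [hJB]
    exact Ideal.mul_mono_right hBlow
  have hxJ : x ∈ J i₀ := Ideal.prod_le_single Finset.univ J (Finset.mem_univ i₀) (hprod ▸ hxspan)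
  -- divisibility: x = v * m^(2a+2)
  obtain ⟨v, hv⟩ : ∃ v, v * m ^ (2 * a + 2) = x := by
    have h2 : M ^ (2 * (2 * a + 2)) ≤ Ideal.span {m ^ (2 * a + 2)} := by
      rw [← Ideal.span_singleton_pow]
      calc M ^ (2 * (2 * a + 2)) = (M * M) ^ (2 * a + 2) := by rw [two_mul, pow_add, mul_pow]
      _ ≤ Ideal.span {m} ^ (2 * a + 2) := Ideal.pow_le_pow_left' c4 _
    exact Ideal.mem_span_singleton'.mp (h2 (c5 _))
  have hmpow : ∀ k : ℕ, 1 ≤ k → m ^ k ∉ J i₀ := by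
    intro k hk hmem
    exact hmQ (hQ.mem_of_pow_mem k (hi₀ hmem))
  have hmv : m * v ∈ J i₀ := by
    refine (hJ i₀).2.halving hmpow (2 * a + 2) (by omega) v ?_
    rw [mul_comm] at hv
    rw [hv]
    exact hxJ
  obtain ⟨r, hr⟩ : ∃ r, r * x = m * v * m ^ (2 * a) := by
    refine Ideal.mem_span_singleton'.mp ?_
    exact hJMa (Ideal.mul_mem_mul hmv (Ideal.pow_mem_pow hmM (2 * a)))
  have : x = r * (m * x) := by
    calc x = v * m ^ (2 * a + 2) := hv.symm
    _ = (m * v * m ^ (2 * a)) * m := by ring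
    _ = (r * x) * m := by rw [hr]
    _ = r * (m * x) := by ring
  rw [hxM m hmM, mul_zero] at this
  exact hx0 this
end Core


theorem TAF_one_dim_unique_min_prime_is_domain {R : Type*} [CommRing R]
    (h : IsTAFRing R) (hdim : ringKrullDim R = 1)
    (huniq : ∃! P : Ideal R, P ∈ minimalPrimes R) : IsDomain R := by
  classical
  obtain ⟨P, hPmin, hPuniq⟩ := huniq
  have hPprime : P.IsPrime := hPmin.1.1
  -- every prime contains P
  have hPle : ∀ p : Ideal R, p.IsPrime → P ≤ p := by
    intro p hp
    haveI := hp
    obtain ⟨q, hq, hqle⟩ := Ideal.exists_minimalPrimes_le (J := p) (bot_le : (⊥ : Ideal R) ≤ p)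
    rwa [hPuniq q hq] at hqle
  haveI : Nontrivial R := by
    by_contra hs
    rw [not_nontrivial_iff_subsingleton] at hs
    exact hPprime.ne_top (Ideal.eq_top_iff_one P |>.mpr
      (by rw [Subsingleton.elim (1 : R) 0]; exact P.zero_mem))
  -- strict pairs of PrimeSpectrum from ideal data
  have mkLT : ∀ (p q : Ideal R) (hp : p.IsPrime) (hq : q.IsPrime), p < q →
      (⟨p, hp⟩ : PrimeSpectrum R) < ⟨q, hq⟩ := by
    intro p q hp hq hpq
    refine lt_of_le_not_ge ((PrimeSpectrum.asIdeal_le_asIdeal _ _).mp hpq.le) ?_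
    intro hle
    exact hpq.not_ge ((PrimeSpectrum.asIdeal_le_asIdeal _ _).mpr hle)
  -- no chains of length 2
  have hnochain2 : ∀ (p q r : Ideal R) (hp : p.IsPrime) (hq : q.IsPrime) (hr : r.IsPrime),
      p < q → q < r → False := by
    intro p q r hp hq hr h1 h2
    set c : LTSeries (PrimeSpectrum R) :=
      (((RelSeries.singleton _ (⟨r, hr⟩ : PrimeSpectrum R)).cons ⟨q, hq⟩
        (by simpa using mkLT q r hq hr h2)).cons ⟨p, hp⟩ (by
          simpa using mkLT p q hp hq h1)) with hc
    have hlen : c.length = 2 := by simp [hc]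
    have := Order.LTSeries.length_le_krullDim c
    rw [hlen] at this
    have h1' : ((2 : ℕ) : WithBot (WithTop ℕ)) ≤ ringKrullDim R := this
    rw [hdim] at h1'
    norm_num at h1'
    exact absurd h1' (show ¬ ((2 : WithBot ℕ∞) ≤ 1) by exact_mod_cast (show ¬ ((2:ℕ) ≤ 1) by norm_num))
  -- there exists a prime strictly above P
  obtain ⟨pbig, hpbig, hPpbig⟩ : ∃ p : Ideal R, p.IsPrime ∧ P < p := by
    by_contra he
    push_neg at he
    have hle0 : ringKrullDim R ≤ 0 := by
      show Order.krullDim (PrimeSpectrum R) ≤ 0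
      refine iSup_le ?_
      intro c
      have hlen : c.length = 0 := by
        by_contra hl
        have hstep := c.step ⟨0, Nat.pos_of_ne_zero hl⟩
        -- two distinct comparable primes exist
        set p0 := c ⟨0, by omega⟩
        have h01 : c (⟨0, Nat.pos_of_ne_zero hl⟩ : Fin c.length).castSucc
            < c (⟨0, Nat.pos_of_ne_zero hl⟩ : Fin c.length).succ := hstep
        set a := c (⟨0, Nat.pos_of_ne_zero hl⟩ : Fin c.length).castSucc
        set b := c (⟨0, Nat.pos_of_ne_zero hl⟩ : Fin c.length).succ
        have hab : a.asIdeal < b.asIdeal := by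
          refine lt_of_le_not_ge ((PrimeSpectrum.asIdeal_le_asIdeal _ _).mpr h01.le) ?_
          intro hba
          exact h01.not_ge ((PrimeSpectrum.asIdeal_le_asIdeal _ _).mp hba)
        -- P ≤ a < b : if P = a fine, else P < a < b both contradict he
        rcases eq_or_lt_of_le (hPle a.asIdeal a.2) with hPa | hPa
        · exact he b.asIdeal b.2 (hPa ▸ hab)
        · exact hnochain2 P a.asIdeal b.asIdeal hPprime a.2 b.2 hPa hab
      simp [hlen]
    rw [hdim] at hle0
    norm_num at hle0
  have hPnotmax : ¬P.IsMaximal := by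
    intro hmax
    have he := hmax.eq_of_le hpbig.ne_top hPpbig.le
    rw [he] at hPpbig
    exact lt_irrefl _ hPpbig
  -- classification of primes
  have hclass : ∀ p : Ideal R, p.IsPrime → p = P ∨ p.IsMaximal := by
    intro p hp
    by_cases hpP : p = P
    · exact Or.inl hpP
    · right
      obtain ⟨mm, hmm, hpm⟩ := Ideal.exists_le_maximal p hp.ne_top
      rcases eq_or_lt_of_le hpm with he | hlt
      · exact he ▸ hmm
      · exfalso
        have hPp : P < p := lt_of_le_of_ne (hPle p hp) (Ne.symm hpP)
        exact hnochain2 P p mm hPprime hp hmm.isPrime hPp hlt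
  -- nilpotency of P
  have hbot_ne_top : (⊥ : Ideal R) ≠ ⊤ := by
    intro e
    exact one_ne_zero (α := R) (Ideal.mem_bot.mp (e ▸ Submodule.mem_top))
  have hPnil : ∃ n : ℕ, (P * P) ^ n = ⊥ := by
    obtain ⟨n, J, hJ, hprod⟩ := h ⊥ hbot_ne_top
    refine ⟨n, le_antisymm ?_ bot_le⟩
    have hPle2 : ∀ i, P * P ≤ J i := by
      intro i
      have hrad : P ≤ (J i).radical := by
        intro a ha
        rw [Ideal.radical_eq_sInf]
        refine Ideal.mem_sInf.mpr ?_
        intro q hq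
        exact hPle q hq.2 ha
      exact Ideal.mul_le.mpr fun a ha b hb =>
        (hJ i).2.mul_mem_of_mem_radical (hJ i).1 (hrad ha) (hrad hb)
    have h1 := Ideal.pow_card_le_prod Finset.univ J (P * P) (fun i _ => hPle2 i)
    rw [hprod]
    simpa using h1
  -- main claim : P = ⊥
  have hPbot : P = ⊥ := by
    by_contra hPne
    obtain ⟨n, hn⟩ := hPnil
    -- P is not idempotent
    have hPP : ¬P ≤ P * P := by
      intro hle
      have hidem : ∀ k : ℕ, 1 ≤ k → P ≤ P ^ k := by
        intro k hk
        induction k with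
        | zero => omega
        | succ j ih =>
          rcases Nat.eq_zero_or_pos j with hj | hj
          · subst hj; simpa using le_rfl
          · calc P ≤ P * P := hle
            _ ≤ P ^ j * P := Ideal.mul_mono (ih hj) le_rfl
            _ = P ^ (j + 1) := by rw [pow_succ]
      have : P ≤ ⊥ := by
        rcases Nat.eq_zero_or_pos n with hn0 | hn0
        · subst hn0
          rw [pow_zero, Ideal.one_eq_top] at hn
          exact absurd hn.symm hbot_ne_top
        · calc P ≤ P ^ (2 * n) := hidem (2 * n) (by omega)
          _ = (P * P) ^ n := by rw [two_mul, pow_add, ← mul_pow, mul_pow]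
          _ = ⊥ := hn
      exact hPne (le_antisymm this bot_le)
    obtain ⟨x₀, hx₀P, hx₀PP⟩ := SetLike.not_le_iff_exists.mp hPP
    -- the colon ideal A = (P*P : x₀)
    set A : Ideal R := (P * P).colon (Ideal.span {x₀}) with hA
    have hAproper : A ≠ ⊤ := by
      intro e
      have : (1 : R) ∈ A := e ▸ Submodule.mem_top
      rw [hA, Ideal.mem_colon_span_singleton, one_mul] at this
      exact hx₀PP this
    have hPA : P ≤ A := by
      intro p hp
      rw [hA, Ideal.mem_colon_span_singleton]
      exact Ideal.mul_mem_mul hp hx₀P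
    obtain ⟨M₀, hM₀max, hAM₀⟩ := Ideal.exists_le_maximal A hAproper
    have hPM₀ : P < M₀ := by
      refine lt_of_le_of_ne (le_trans hPA hAM₀) ?_
      intro e
      exact hPnotmax (e ▸ hM₀max)
    -- the kernel ideal
    set K : Ideal R := P * P ⊔ Ideal.span {x₀} * M₀ with hK
    have hKP : K ≤ P := by
      refine sup_le (le_trans Ideal.mul_le_right le_rfl) ?_
      refine le_trans Ideal.mul_le_left ?_
      rw [Ideal.span_le, Set.singleton_subset_iff]
      exact hx₀P
    have hx₀K : x₀ ∉ K := by
      intro hmem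
      rw [hK] at hmem
      obtain ⟨y, hy, z, hz, hyz⟩ := Submodule.mem_sup.mp hmem
      obtain ⟨t, htM₀, hzt⟩ := Ideal.mem_span_singleton_mul.mp hz
      have hxy : x₀ * (1 - t) = y := by
        rw [mul_sub, mul_one, hzt, ← hyz]
        ring
      have h1t : (1 - t) ∈ A := by
        rw [hA, Ideal.mem_colon_span_singleton, mul_comm (1 - t) x₀, hxy]
        exact hy
      have : (1 : R) ∈ M₀ := by
        have := M₀.add_mem (hAM₀ h1t) htM₀
        simpa using this
      exact hM₀max.ne_top (Ideal.eq_top_iff_one M₀ |>.mpr this)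
    -- pass to the quotient ring R ⧸ K
    set π := Ideal.Quotient.mk K with hπ
    have hπsurj : Function.Surjective π := Ideal.Quotient.mk_surjective
    have hkerK : RingHom.ker π = K := Ideal.mk_ker
    set P₂ : Ideal (R ⧸ K) := Ideal.map π P with hP₂
    set M₂ : Ideal (R ⧸ K) := Ideal.map π M₀ with hM₂
    set x₂ : R ⧸ K := π x₀ with hx₂def
    have htaf₂ : IsTAFRing (R ⧸ K) := h.quotient K
    have hKM₀ : K ≤ M₀ := le_trans hKP (le_of_lt hPM₀)
    have hx₂ne : x₂ ≠ 0 := by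
      rw [hx₂def, Ne, Ideal.Quotient.eq_zero_iff_mem]
      exact hx₀K
    haveI hP₂prime : P₂.IsPrime := by
      haveI := hPprime
      exact Ideal.map_isPrime_of_surjective hπsurj (by rw [hkerK]; exact hKP)
    haveI hM₂prime : M₂.IsPrime := by
      haveI := hM₀max.isPrime
      exact Ideal.map_isPrime_of_surjective hπsurj (by rw [hkerK]; exact hKM₀)
    have hcomap_bot : Ideal.comap π (⊥ : Ideal (R ⧸ K)) = K := by
      rw [← RingHom.ker_eq_comap_bot π, hkerK]
    have hcomapP₂ : Ideal.comap π P₂ = P := by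
      rw [hP₂, Ideal.comap_map_of_surjective π hπsurj, hcomap_bot]
      exact sup_eq_left.mpr hKP
    have hcomapM₂ : Ideal.comap π M₂ = M₀ := by
      rw [hM₂, Ideal.comap_map_of_surjective π hπsurj, hcomap_bot]
      exact sup_eq_left.mpr hKM₀
    have hP₂M₂ : P₂ < M₂ := by
      refine lt_of_le_of_ne (Ideal.map_mono (le_of_lt hPM₀)) ?_
      intro e
      have hPM : P = M₀ := by rw [← hcomapP₂, ← hcomapM₂, e]
      rw [hPM] at hPnotmax
      exact hPnotmax hM₀max
    have hP₂sq : P₂ * P₂ = ⊥ := by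
      refine le_antisymm ?_ bot_le
      rw [hP₂, ← Ideal.map_mul]
      calc Ideal.map π (P * P) ≤ Ideal.map π K := Ideal.map_mono le_sup_left
      _ = ⊥ := Ideal.map_quotient_self K
    have hx₂P₂ : x₂ ∈ P₂ := Ideal.mem_map_of_mem π hx₀P
    have hx₂M₂ : ∀ μ ∈ M₂, μ * x₂ = 0 := by
      intro μ hμ
      obtain ⟨μ₀, hμ₀, rfl⟩ := Ideal.mem_map_iff_of_surjective π hπsurj |>.mp hμ
      rw [← map_mul, Ideal.Quotient.eq_zero_iff_mem]
      refine le_sup_right (a := P * P) ?_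
      have : x₀ * μ₀ ∈ Ideal.span {x₀} * M₀ :=
        Ideal.mul_mem_mul (Ideal.mem_span_singleton_self x₀) hμ₀
      rwa [mul_comm x₀ μ₀] at this
    have hann₂ : ∀ s, s * x₂ = 0 → s ∈ M₂ := by
      intro s hs
      obtain ⟨s₀, rfl⟩ := hπsurj s
      rw [← map_mul, Ideal.Quotient.eq_zero_iff_mem] at hs
      obtain ⟨y, hy, z, hz, hyz⟩ := Submodule.mem_sup.mp hs
      obtain ⟨t, htM₀, hzt⟩ := Ideal.mem_span_singleton_mul.mp hz
      have hsty : (s₀ - t) * x₀ ∈ P * P := by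
        have he : (s₀ - t) * x₀ = y := by
          rw [sub_mul, mul_comm t x₀, hzt, ← hyz]
          ring
        rw [he]
        exact hy
      have hstA : s₀ - t ∈ A := by
        rw [hA, Ideal.mem_colon_span_singleton]
        exact hsty
      have hs₀ : s₀ ∈ M₀ := by
        have := M₀.add_mem (hAM₀ hstA) htM₀
        simpa using this
      exact Ideal.mem_map_of_mem π hs₀
    -- localize at M₂
    set TT := Localization.AtPrime M₂ with hTT
    set φ := algebraMap (R ⧸ K) TT with hφ
    have htafT : IsTAFRing TT := htaf₂.localization M₂.primeCompl TT rfl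
    set Q : Ideal TT := Ideal.map φ P₂ with hQdef
    set Mℓ : Ideal TT := Ideal.map φ M₂ with hMℓdef
    have hdisj : Disjoint (M₂.primeCompl : Set (R ⧸ K)) (P₂ : Set (R ⧸ K)) := by
      rw [Set.disjoint_left]
      intro a ha ha'
      exact ha (le_of_lt hP₂M₂ ha')
    have hQprime : Q.IsPrime :=
      IsLocalization.isPrime_of_isPrime_disjoint M₂.primeCompl TT P₂ hP₂prime hdisj
    have hQMℓ : Q < Mℓ := by
      refine lt_of_le_of_ne (Ideal.map_mono (le_of_lt hP₂M₂)) ?_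
      intro e
      obtain ⟨ω, hωM₂, hωP₂⟩ := SetLike.not_le_iff_exists.mp (not_le_of_gt hP₂M₂)
      have h1 : φ ω ∈ Mℓ := Ideal.mem_map_of_mem φ hωM₂
      rw [← e] at h1
      have hc : Ideal.comap φ (Ideal.map φ P₂) = P₂ :=
        IsLocalization.comap_map_of_isPrime_disjoint M₂.primeCompl TT hP₂prime hdisj
      have h2 : ω ∈ Ideal.comap φ (Ideal.map φ P₂) := Ideal.mem_comap.mpr h1
      rw [hc] at h2
      exact hωP₂ h2
    have hMℓtop : Mℓ ≠ ⊤ := by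
      intro e
      have h1 : (1 : TT) ∈ Mℓ := e ▸ Submodule.mem_top
      rw [hMℓdef] at h1
      obtain ⟨⟨j, s⟩, hjs⟩ := IsLocalization.mem_map_algebraMap_iff M₂.primeCompl TT |>.mp h1
      rw [one_mul] at hjs
      obtain ⟨c, hc⟩ := IsLocalization.eq_iff_exists (M := M₂.primeCompl) (S := TT) |>.mp hjs
      have hcs : (c : R ⧸ K) * s ∉ M₂ := Submonoid.mul_mem _ c.2 s.2
      exact hcs (hc ▸ M₂.mul_mem_left (c : R ⧸ K) j.2)
    have hprT : ∀ p : Ideal TT, p.IsPrime → p = Q ∨ p = Mℓ := by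
      intro p hp
      have hcp := (IsLocalization.isPrime_iff_isPrime_disjoint M₂.primeCompl TT p).mp hp
      set p₂ := Ideal.comap φ p with hp₂def
      have hp₂prime : p₂.IsPrime := hcp.1
      have hpM₂ : p₂ ≤ M₂ := by
        intro a ha
        by_contra haM
        exact Set.disjoint_left.mp hcp.2 haM ha
      haveI := hp₂prime
      have hp₁prime : (Ideal.comap π p₂).IsPrime := inferInstance
      have hple : Ideal.comap π p₂ ≤ M₀ := by
        rw [← hcomapM₂]
        exact Ideal.comap_mono hpM₂
      have hp₂eq : p₂ = P₂ ∨ p₂ = M₂ := by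
        rcases hclass _ hp₁prime with he | hmax
        · left
          rw [← Ideal.map_comap_of_surjective π hπsurj p₂, he, ← hP₂]
        · right
          have heq : Ideal.comap π p₂ = M₀ := hmax.eq_of_le hM₀max.ne_top hple
          rw [← Ideal.map_comap_of_surjective π hπsurj p₂, heq, ← hM₂]
      have hmc : Ideal.map φ p₂ = p := IsLocalization.map_comap M₂.primeCompl TT p
      rcases hp₂eq with he | he
      · left; rw [← hmc, he, hQdef]
      · right; rw [← hmc, he, hMℓdef]
    have hQ2 : Q * Q = ⊥ := by
      rw [hQdef, ← Ideal.map_mul, hP₂sq, Ideal.map_bot]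
    set x₃ := φ x₂ with hx₃def
    have hx₃ne : x₃ ≠ 0 := by
      intro e
      obtain ⟨c, hc⟩ := (IsLocalization.map_eq_zero_iff M₂.primeCompl TT x₂).mp e
      exact c.2 (hann₂ c hc)
    have hx₃Q : x₃ ∈ Q := Ideal.mem_map_of_mem φ hx₂P₂
    have hx₃M : ∀ μ ∈ Mℓ, μ * x₃ = 0 := by
      intro μ hμ
      have hle : Mℓ ≤ Ideal.torsionOf TT TT x₃ := by
        rw [hMℓdef, Ideal.map_le_iff_le_comap]
        intro μ₀ hμ₀
        rw [Ideal.mem_comap, Ideal.mem_torsionOf_iff, smul_eq_mul, hx₃def, ← map_mul,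
          hx₂M₂ μ₀ hμ₀, map_zero]
      have := hle hμ
      rwa [Ideal.mem_torsionOf_iff, smul_eq_mul] at this
    exact taf_core_lemma htafT Q Mℓ hQprime hQMℓ hMℓtop hprT hQ2 x₃ hx₃ne hx₃Q hx₃M
  -- conclude
  have hbotprime : (⊥ : Ideal R).IsPrime := hPbot ▸ hPprime
  haveI : NoZeroDivisors R := by
    constructor
    intro a b hab
    rcases hbotprime.mem_or_mem (Ideal.mem_bot.mpr hab : a * b ∈ (⊥ : Ideal R)) with h | h
    · exact Or.inl (Ideal.mem_bot.mp h)
    · exact Or.inr (Ideal.mem_bot.mp h)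
  exact NoZeroDivisors.to_isDomain R
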